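/- Let 0 < p < 2. There exists a constant L ≥ 1 depending only on p such that for all integers d ≥ 2 and all natural numbers k, e_k(S_p^{d−1}, ℓ_p^d) ≤ L · e_k(S_2^{d−1}, ℓ_2^d). (This follows by transporting coverings of the Euclidean sphere to the p-sphere via the Mazur map M_p(x) = (sign(x_j)|x_j|^{2/p})_{j=1}^d, which is Lipschitz with a constant independent of the dimension.) -/

import Mathlib

open scoped Pointwise BigOperators

/-- The `ℓ_p` (quasi-)norm on `ℝ^d` for `0 < p < ∞`. -/
noncomputable def pNorm (p : ℝ) {d : ℕ} (x : Fin d → ℝ) : ℝ :=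
  (∑ i, |x i| ^ p) ^ (1 / p)

/-- The `ℓ_∞` norm on `ℝ^d`. -/
noncomputable def supNorm {d : ℕ} (x : Fin d → ℝ) : ℝ :=
  ⨆ i, |x i|

/-- The closed unit ball of `ℓ_p^d`. -/
def pBall (p : ℝ) (d : ℕ) : Set (Fin d → ℝ) := {x | pNorm p x ≤ 1}

/-- The unit sphere of `ℓ_p^d`. -/
def pSphere (p : ℝ) (d : ℕ) : Set (Fin d → ℝ) := {x | pNorm p x = 1}

/-- The closed unit ball of `ℓ_∞^d`. -/
def supBall (d : ℕ) : Set (Fin d → ℝ) := {x | supNorm x ≤ 1}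

/-- The `k`-th (dyadic) entropy number of `K` with respect to the "unit ball" `B`:
the infimum of all `ε > 0` such that `K` can be covered by `2^(k-1)` translates of `ε • B`. -/
noncomputable def entropyNumber {d : ℕ} (K B : Set (Fin d → ℝ)) (k : ℕ) : ℝ :=
  sInf {ε : ℝ | 0 < ε ∧ ∃ c : Fin (2 ^ (k - 1)) → (Fin d → ℝ),
    K ⊆ ⋃ j, (c j +ᵥ ε • B)}

noncomputable def mazurFun (α t : ℝ) : ℝ := if 0 ≤ t then t ^ α else -((-t) ^ α)

lemma mazurFun_of_nonneg {α t : ℝ} (ht : 0 ≤ t) : mazurFun α t = t ^ α := if_pos ht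

lemma mazurFun_of_neg {α t : ℝ} (ht : t < 0) : mazurFun α t = -((-t) ^ α) := if_neg (not_le.mpr ht)

lemma abs_mazurFun (α t : ℝ) : |mazurFun α t| = |t| ^ α := by
  rcases le_or_gt 0 t with ht | ht
  · rw [mazurFun_of_nonneg ht, abs_of_nonneg (Real.rpow_nonneg ht α), abs_of_nonneg ht]
  · rw [mazurFun_of_neg ht, abs_neg, abs_of_nonneg (Real.rpow_nonneg (by linarith) α),
      abs_of_neg ht]

lemma mazurFun_comp (α β t : ℝ) (hβ : 0 < β) (hαβ : β * α = 1) :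
    mazurFun α (mazurFun β t) = t := by
  rcases le_or_gt 0 t with ht | ht
  · rw [mazurFun_of_nonneg ht, mazurFun_of_nonneg (Real.rpow_nonneg ht β),
      ← Real.rpow_mul ht, hαβ, Real.rpow_one]
  · have h1 : (0:ℝ) < -t := by linarith
    have h2 : (0:ℝ) < (-t) ^ β := Real.rpow_pos_of_pos h1 β
    rw [mazurFun_of_neg ht, mazurFun_of_neg (by linarith), neg_neg,
      ← Real.rpow_mul h1.le, hαβ, Real.rpow_one, neg_neg]

/-- tangent line bound: `A^α - B^α ≤ α * (A - B) * A^(α-1)` for `0 ≤ B ≤ A`. -/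

lemma rpow_sub_rpow_le {α A B : ℝ} (hα : 1 ≤ α) (hB : 0 ≤ B) (hBA : B ≤ A) :
    A ^ α - B ^ α ≤ α * (A - B) * A ^ (α - 1) := by
  have hA : 0 ≤ A := hB.trans hBA
  rcases eq_or_lt_of_le hA with h0 | h0
  · have hB0 : B = 0 := le_antisymm (hBA.trans h0.symm.le) hB
    simp [← h0, hB0, Real.zero_rpow (by linarith : α ≠ 0)]
  · have hs : (-1:ℝ) ≤ B / A - 1 := by
      have : 0 ≤ B / A := div_nonneg hB h0.le
      linarith
    have key := one_add_mul_self_le_rpow_one_add hs hα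
    have h1 : (1:ℝ) + (B / A - 1) = B / A := by ring
    rw [h1] at key
    have hApos : (0:ℝ) < A ^ α := Real.rpow_pos_of_pos h0 α
    have key2 : (1 + α * (B / A - 1)) * A ^ α ≤ (B / A) ^ α * A ^ α :=
      mul_le_mul_of_nonneg_right key hApos.le
    rw [Real.div_rpow hB h0.le, div_mul_cancel₀ _ hApos.ne'] at key2
    have hAm : A ^ α = A * A ^ (α - 1) := by
      have h2 := Real.rpow_add h0 1 (α - 1)
      rw [Real.rpow_one] at h2
      rw [show (1:ℝ) + (α - 1) = α by ring] at h2
      exact h2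
    have hdiv : B / A * A ^ α = B * A ^ (α - 1) := by
      rw [hAm]; field_simp
    nlinarith [key2, hAm, hdiv]

lemma mazurFun_of_nonpos {α t : ℝ} (hα : 1 ≤ α) (ht : t ≤ 0) :
    mazurFun α t = -((-t) ^ α) := by
  rcases eq_or_lt_of_le ht with h0 | h0
  · subst h0
    rw [mazurFun_of_nonneg le_rfl, neg_zero, Real.zero_rpow (by linarith : α ≠ 0), neg_zero]
  · exact mazurFun_of_neg h0

lemma mazurFun_neg {α : ℝ} (hα : 1 ≤ α) (t : ℝ) : mazurFun α (-t) = -mazurFun α t := by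
  rcases le_or_gt 0 t with ht | ht
  · rw [mazurFun_of_nonneg ht, mazurFun_of_nonpos hα (by linarith), neg_neg]
  · rw [mazurFun_of_neg ht, mazurFun_of_nonneg (by linarith : (0:ℝ) ≤ -t), neg_neg]

lemma mazur_aux_nonneg {α : ℝ} (hα : 1 ≤ α) {a b : ℝ} (hb : 0 ≤ b) (hba : b ≤ a) :
    |mazurFun α a - mazurFun α b| ≤ α * |a - b| * (|a| + |b|) ^ (α - 1) := by
  have ha : 0 ≤ a := hb.trans hba
  rw [mazurFun_of_nonneg ha, mazurFun_of_nonneg hb,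
    abs_of_nonneg (sub_nonneg.mpr (Real.rpow_le_rpow hb hba (by linarith))),
    abs_of_nonneg (sub_nonneg.mpr hba), abs_of_nonneg ha, abs_of_nonneg hb]
  calc a ^ α - b ^ α ≤ α * (a - b) * a ^ (α - 1) := rpow_sub_rpow_le hα hb hba
    _ ≤ α * (a - b) * (a + b) ^ (α - 1) := by
        apply mul_le_mul_of_nonneg_left
          (Real.rpow_le_rpow ha (by linarith) (by linarith))
        apply mul_nonneg (by linarith) (by linarith)

lemma mazur_aux_mixed {α : ℝ} (hα : 1 ≤ α) {a b : ℝ} (ha : 0 ≤ a) (hb : b ≤ 0) :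
    |mazurFun α a - mazurFun α b| ≤ α * |a - b| * (|a| + |b|) ^ (α - 1) := by
  rw [mazurFun_of_nonneg ha, mazurFun_of_nonpos hα hb, sub_neg_eq_add]
  have h1 : (0:ℝ) ≤ -b := by linarith
  have h2 : 0 ≤ a ^ α + (-b) ^ α := add_nonneg (Real.rpow_nonneg ha α) (Real.rpow_nonneg h1 α)
  rw [abs_of_nonneg h2]
  have h3 : a ^ α + (-b) ^ α ≤ (a + -b) ^ α := by
    have := NNReal.add_rpow_le_rpow_add (⟨a, ha⟩ : NNReal) ⟨-b, h1⟩ hα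
    exact_mod_cast this
  have hab : |a - b| = a + -b := by rw [abs_of_nonneg (by linarith)]; ring
  rcases eq_or_lt_of_le (by linarith : (0:ℝ) ≤ a + -b) with h0 | h0
  · have hz : (a + -b) ^ α = 0 := by
      rw [← h0, Real.zero_rpow (by linarith : α ≠ 0)]
    have : a ^ α + (-b) ^ α ≤ 0 := by rw [hz] at h3; exact h3
    have hrhs : 0 ≤ α * |a - b| * (|a| + |b|) ^ (α - 1) := by
      apply mul_nonneg (mul_nonneg (by linarith) (abs_nonneg _))
      exact Real.rpow_nonneg (by positivity) _
    linarith
  · have h4 : (a + -b) ^ α = (a + -b) * (a + -b) ^ (α - 1) := by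
      have h5 := Real.rpow_add h0 1 (α - 1)
      rw [Real.rpow_one] at h5
      rw [show (1:ℝ) + (α - 1) = α by ring] at h5
      exact h5
    have h6 : (a + -b) ^ (α - 1) ≤ (|a| + |b|) ^ (α - 1) := by
      apply Real.rpow_le_rpow (by linarith) _ (by linarith)
      calc a + -b ≤ |a| + |(-b)| := add_le_add (le_abs_self a) (le_abs_self (-b))
        _ = |a| + |b| := by rw [abs_neg]
    calc a ^ α + (-b) ^ α ≤ (a + -b) * (a + -b) ^ (α - 1) := by rw [← h4]; exact h3
      _ ≤ (a + -b) * (|a| + |b|) ^ (α - 1) := mul_le_mul_of_nonneg_left h6 (by linarith)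
      _ ≤ α * |a - b| * (|a| + |b|) ^ (α - 1) := by
          apply mul_le_mul_of_nonneg_right _ (Real.rpow_nonneg (by positivity) _)
          rw [hab]; nlinarith

lemma mazur_ptwise {α : ℝ} (hα : 1 ≤ α) (a b : ℝ) :
    |mazurFun α a - mazurFun α b| ≤ α * |a - b| * (|a| + |b|) ^ (α - 1) := by
  have hsymm : ∀ u v : ℝ,
      |mazurFun α u - mazurFun α v| = |mazurFun α v - mazurFun α u| := fun u v =>
    abs_sub_comm _ _
  rcases le_or_gt 0 a with ha | ha <;> rcases le_or_gt 0 b with hb | hb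
  · rcases le_total b a with h | h
    · exact mazur_aux_nonneg hα hb h
    · rw [hsymm, abs_sub_comm a b, add_comm |a| |b|]
      exact mazur_aux_nonneg hα ha h
  · exact mazur_aux_mixed hα ha hb.le
  · rw [hsymm, abs_sub_comm a b, add_comm |a| |b|]
    exact mazur_aux_mixed hα hb ha.le
  · have key : |mazurFun α (-b) - mazurFun α (-a)| ≤
        α * |(-b) - (-a)| * (|(-b)| + |(-a)|) ^ (α - 1) := by
      rcases le_total (-a) (-b) with h | h
      · exact mazur_aux_nonneg hα (by linarith) h
      · rw [hsymm, abs_sub_comm (-b) (-a), add_comm |(-b)| |(-a)|]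
        exact mazur_aux_nonneg hα (by linarith) h
    rw [mazurFun_neg hα, mazurFun_neg hα, abs_neg, abs_neg] at key
    have e1 : |(-(mazurFun α b)) - -(mazurFun α a)| = |mazurFun α a - mazurFun α b| := by
      congr 1; ring
    have e2 : |(-b) - (-a)| = |a - b| := by congr 1; ring
    rw [e1, e2, add_comm |b| |a|] at key
    exact key

lemma pNorm_nonneg (p : ℝ) {d : ℕ} (x : Fin d → ℝ) : 0 ≤ pNorm p x :=
  Real.rpow_nonneg (Finset.sum_nonneg fun i _ => Real.rpow_nonneg (abs_nonneg _) _) _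

lemma pNorm_rpow {p : ℝ} (hp : 0 < p) {d : ℕ} (x : Fin d → ℝ) :
    pNorm p x ^ p = ∑ i, |x i| ^ p := by
  unfold pNorm
  rw [← Real.rpow_mul (Finset.sum_nonneg fun i _ => Real.rpow_nonneg (abs_nonneg _) _),
    one_div_mul_cancel hp.ne', Real.rpow_one]

lemma pNorm_eq_one_iff {p : ℝ} (hp : 0 < p) {d : ℕ} (x : Fin d → ℝ) :
    pNorm p x = 1 ↔ ∑ i, |x i| ^ p = 1 := by
  constructor
  · intro h
    have := pNorm_rpow hp x
    rw [h, Real.one_rpow] at this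
    exact this.symm
  · intro h
    unfold pNorm
    rw [h, Real.one_rpow]

lemma pNorm_smul {p : ℝ} (hp : 0 < p) {d : ℕ} (c : ℝ) (x : Fin d → ℝ) :
    pNorm p (c • x) = |c| * pNorm p x := by
  unfold pNorm
  have h1 : ∀ i ∈ Finset.univ, |(c • x) i| ^ p = |c| ^ p * |x i| ^ p := fun i _ => by
    show |c * x i| ^ p = _
    rw [abs_mul, Real.mul_rpow (abs_nonneg c) (abs_nonneg _)]
  rw [Finset.sum_congr rfl h1, ← Finset.mul_sum,
    Real.mul_rpow (Real.rpow_nonneg (abs_nonneg c) p)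
      (Finset.sum_nonneg fun i _ => Real.rpow_nonneg (abs_nonneg _) _),
    ← Real.rpow_mul (abs_nonneg c), mul_one_div_cancel hp.ne', Real.rpow_one]

lemma pNorm_zero {p : ℝ} (hp : 0 < p) {d : ℕ} : pNorm p (0 : Fin d → ℝ) = 0 := by
  unfold pNorm
  have : ∀ i ∈ Finset.univ, |(0 : Fin d → ℝ) i| ^ p = 0 := fun i _ => by
    show |(0:ℝ)| ^ p = 0
    rw [abs_zero, Real.zero_rpow hp.ne']
  rw [Finset.sum_congr rfl this, Finset.sum_const, smul_zero,
    Real.zero_rpow (by positivity : (1:ℝ)/p ≠ 0)]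

lemma pNorm_two_eq {d : ℕ} (x : Fin d → ℝ) :
    pNorm 2 x = ‖(WithLp.equiv 2 (Fin d → ℝ)).symm x‖ := by
  rw [EuclideanSpace.norm_eq]
  unfold pNorm
  rw [Real.sqrt_eq_rpow]
  congr 1
  refine Finset.sum_congr rfl fun i _ => ?_
  rw [show ((WithLp.equiv 2 (Fin d → ℝ)).symm x).ofLp i = x i from rfl, Real.norm_eq_abs, Real.rpow_two]

lemma pNorm_two_triangle {d : ℕ} (x y : Fin d → ℝ) :
    pNorm 2 (x + y) ≤ pNorm 2 x + pNorm 2 y := by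
  rw [pNorm_two_eq, pNorm_two_eq, pNorm_two_eq]
  exact norm_add_le _ _

lemma pNorm_two_eq_zero {d : ℕ} {x : Fin d → ℝ} (h : pNorm 2 x = 0) : x = 0 := by
  rw [pNorm_two_eq] at h
  have := norm_eq_zero.mp h
  funext i
  have h2 : (WithLp.equiv 2 (Fin d → ℝ)).symm x i = 0 := by rw [this]; rfl
  exact h2

lemma sum_sq_le_of_pNorm_two_le_one {d : ℕ} {x : Fin d → ℝ} (h : pNorm 2 x ≤ 1) :
    ∑ i, |x i| ^ (2:ℝ) ≤ 1 := by
  have h2 := pNorm_rpow (by norm_num : (0:ℝ) < 2) x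
  have h3 : pNorm 2 x ^ (2:ℝ) ≤ 1 ^ (2:ℝ) :=
    Real.rpow_le_rpow (pNorm_nonneg _ _) h (by norm_num)
  rw [Real.one_rpow] at h3
  linarith [h2 ▸ h3]

lemma mazur_mem_sphere {p : ℝ} {d : ℕ} (hp : 0 < p) (hp2 : p < 2) {x : Fin d → ℝ} (hx : x ∈ pSphere 2 d) :
    (fun i => mazurFun (2/p) (x i)) ∈ pSphere p d := by
  have hx1 : ∑ i, |x i| ^ (2:ℝ) = 1 := (pNorm_eq_one_iff (by norm_num) x).mp hx
  refine (pNorm_eq_one_iff hp _).mpr ?_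
  rw [← hx1]
  refine Finset.sum_congr rfl fun i _ => ?_
  rw [abs_mazurFun, ← Real.rpow_mul (abs_nonneg _), div_mul_cancel₀ _ hp.ne']

lemma mazur_surj {p : ℝ} {d : ℕ} (hp : 0 < p) (hp2 : p < 2) {x : Fin d → ℝ} (hx : x ∈ pSphere p d) :
    ∃ y ∈ pSphere 2 d, (fun i => mazurFun (2/p) (y i)) = x := by
  refine ⟨fun i => mazurFun (p/2) (x i), ?_, ?_⟩
  · have hx1 : ∑ i, |x i| ^ p = 1 := (pNorm_eq_one_iff hp x).mp hx
    refine (pNorm_eq_one_iff (by norm_num) _).mpr ?_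
    rw [← hx1]
    refine Finset.sum_congr rfl fun i _ => ?_
    rw [abs_mazurFun, ← Real.rpow_mul (abs_nonneg _)]
    congr 1
    field_simp
  · funext i
    exact mazurFun_comp (2/p) (p/2) (x i) (by positivity) (by field_simp)

lemma young_step {p δ s t : ℝ} (hp : 0 < p) (hp2 : p < 2) (hδ : 0 < δ) (hs : 0 ≤ s) (ht : 0 ≤ t) :
    s ^ p * t ^ (2 - p) ≤
      (p/2) * δ^p / δ^(2:ℝ) * s^(2:ℝ) + ((2-p)/2) * δ^p * t^(2:ℝ) := by
  have key := Real.geom_mean_le_arith_mean2_weighted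
    (by positivity : (0:ℝ) ≤ p/2) (by linarith : (0:ℝ) ≤ (2-p)/2)
    (by positivity : (0:ℝ) ≤ s^(2:ℝ)/δ^(2:ℝ)) (by positivity : (0:ℝ) ≤ t^(2:ℝ))
    (by ring : p/2 + (2-p)/2 = 1)
  have hδp : (0:ℝ) < δ ^ p := Real.rpow_pos_of_pos hδ p
  have hδ2 : (0:ℝ) < δ ^ (2:ℝ) := Real.rpow_pos_of_pos hδ 2
  have e1 : (s^(2:ℝ)/δ^(2:ℝ)) ^ (p/2) = s^p / δ^p := by
    rw [Real.div_rpow (by positivity) hδ2.le, ← Real.rpow_mul hs, ← Real.rpow_mul hδ.le,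
      show (2:ℝ)*(p/2) = p by ring]
  have e2 : (t^(2:ℝ)) ^ ((2-p)/2) = t ^ (2-p) := by
    rw [← Real.rpow_mul ht]
    congr 1; ring
  rw [e1, e2] at key
  have key2 : δ^p * (s^p/δ^p * t^(2-p)) ≤
      δ^p * (p/2 * (s^(2:ℝ)/δ^(2:ℝ)) + (2-p)/2 * t^(2:ℝ)) :=
    mul_le_mul_of_nonneg_left key hδp.le
  have e3 : δ^p * (s^p/δ^p * t^(2-p)) = s^p * t^(2-p) := by
    field_simp
  rw [e3] at key2
  calc s^p * t^(2-p) ≤ δ^p * (p/2 * (s^(2:ℝ)/δ^(2:ℝ)) + (2-p)/2 * t^(2:ℝ)) := key2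
    _ = (p/2) * δ^p / δ^(2:ℝ) * s^(2:ℝ) + ((2-p)/2) * δ^p * t^(2:ℝ) := by
        field_simp

lemma mazur_lip {p : ℝ} {d : ℕ} (hp : 0 < p) (hp2 : p < 2) (x y : Fin d → ℝ)
    (hx : pNorm 2 x ≤ 1) (hy : pNorm 2 y ≤ 1) :
    pNorm p (fun i => mazurFun (2/p) (x i) - mazurFun (2/p) (y i)) ≤
      (2/p) * 4 ^ (1/p) * pNorm 2 (x - y) := by
  have hα : 1 ≤ 2/p := by rw [le_div_iff₀ hp]; linarith
  have hα0 : 0 < 2/p := by positivity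
  set δ := pNorm 2 (x - y) with hδdef
  have hδ0 : 0 ≤ δ := pNorm_nonneg _ _
  rcases eq_or_lt_of_le hδ0 with h0 | h0
  · have hxy : x = y := by
      have := pNorm_two_eq_zero h0.symm
      have := sub_eq_zero.mp this
      exact this
    subst hxy
    have : (fun i => mazurFun (2/p) (x i) - mazurFun (2/p) (x i)) = (0 : Fin d → ℝ) := by
      funext i; simp
    rw [this, pNorm_zero hp, ← h0]
    simp
  · -- sums
    have hS : ∑ i, |x i - y i| ^ (2:ℝ) = δ ^ (2:ℝ) := by
      rw [hδdef, pNorm_rpow (by norm_num : (0:ℝ) < 2)]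
      rfl
    have hT : ∑ i, (|x i| + |y i|) ^ (2:ℝ) ≤ 4 := by
      have hptw : ∀ i ∈ Finset.univ, ((|x i| + |y i|) ^ (2:ℝ) : ℝ) ≤
          2 * |x i| ^ (2:ℝ) + 2 * |y i| ^ (2:ℝ) := fun i _ => by
        rw [Real.rpow_two, Real.rpow_two, Real.rpow_two]
        nlinarith [abs_nonneg (x i), abs_nonneg (y i), sq_nonneg (|x i| - |y i|)]
      calc ∑ i, (|x i| + |y i|) ^ (2:ℝ) ≤
          ∑ i, (2 * |x i| ^ (2:ℝ) + 2 * |y i| ^ (2:ℝ)) := Finset.sum_le_sum hptw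
        _ = 2 * (∑ i, |x i| ^ (2:ℝ)) + 2 * (∑ i, |y i| ^ (2:ℝ)) := by
            rw [Finset.sum_add_distrib, ← Finset.mul_sum, ← Finset.mul_sum]
        _ ≤ 4 := by
            have := sum_sq_le_of_pNorm_two_le_one hx
            have := sum_sq_le_of_pNorm_two_le_one hy
            linarith
    set C1 : ℝ := (2/p)^p * ((p/2) * δ^p / δ^(2:ℝ)) with hC1
    set C2 : ℝ := (2/p)^p * (((2-p)/2) * δ^p) with hC2
    have step1 : ∀ i ∈ Finset.univ,
        |mazurFun (2/p) (x i) - mazurFun (2/p) (y i)| ^ p ≤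
          C1 * |x i - y i| ^ (2:ℝ) + C2 * (|x i| + |y i|) ^ (2:ℝ) := fun i _ => by
      have h1 := mazur_ptwise hα (x i) (y i)
      have h2 : |mazurFun (2/p) (x i) - mazurFun (2/p) (y i)| ^ p ≤
          ((2/p) * |x i - y i| * (|x i| + |y i|) ^ (2/p - 1)) ^ p :=
        Real.rpow_le_rpow (abs_nonneg _) h1 hp.le
      have h3 : ((2/p) * |x i - y i| * (|x i| + |y i|) ^ (2/p - 1)) ^ p =
          (2/p)^p * (|x i - y i| ^ p * (|x i| + |y i|) ^ (2 - p)) := by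
        rw [Real.mul_rpow (by positivity) (Real.rpow_nonneg (by positivity) _),
          Real.mul_rpow hα0.le (abs_nonneg _), ← Real.rpow_mul (by positivity)]
        rw [show (2/p - 1) * p = 2 - p by field_simp]
        ring
      have h4 := young_step hp hp2 h0 (abs_nonneg (x i - y i)) (by positivity : (0:ℝ) ≤ |x i| + |y i|)
      calc |mazurFun (2/p) (x i) - mazurFun (2/p) (y i)| ^ p ≤
          (2/p)^p * (|x i - y i| ^ p * (|x i| + |y i|) ^ (2 - p)) := by rw [← h3]; exact h2
        _ ≤ (2/p)^p * ((p/2) * δ^p / δ^(2:ℝ) * |x i - y i|^(2:ℝ) +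
              ((2-p)/2) * δ^p * (|x i| + |y i|)^(2:ℝ)) := by
            apply mul_le_mul_of_nonneg_left h4 (Real.rpow_nonneg hα0.le _)
        _ = C1 * |x i - y i| ^ (2:ℝ) + C2 * (|x i| + |y i|) ^ (2:ℝ) := by
            rw [hC1, hC2]; ring
    have main : ∑ i, |mazurFun (2/p) (x i) - mazurFun (2/p) (y i)| ^ p ≤
        (2/p)^p * 4 * δ^p := by
      calc ∑ i, |mazurFun (2/p) (x i) - mazurFun (2/p) (y i)| ^ p ≤
          ∑ i, (C1 * |x i - y i| ^ (2:ℝ) + C2 * (|x i| + |y i|) ^ (2:ℝ)) :=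
            Finset.sum_le_sum step1
        _ = C1 * δ^(2:ℝ) + C2 * ∑ i, (|x i| + |y i|) ^ (2:ℝ) := by
            rw [Finset.sum_add_distrib, ← Finset.mul_sum, ← Finset.mul_sum, hS]
        _ ≤ (2/p)^p * 4 * δ^p := by
            have hδ2 : (0:ℝ) < δ ^ (2:ℝ) := Real.rpow_pos_of_pos h0 2
            have hδp : (0:ℝ) < δ ^ p := Real.rpow_pos_of_pos h0 p
            have hC2nn : 0 ≤ C2 := by
              rw [hC2]
              exact mul_nonneg (Real.rpow_nonneg hα0.le _) (mul_nonneg (by linarith) hδp.le)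
            have e1 : C1 * δ^(2:ℝ) = (2/p)^p * (p/2) * δ^p := by
              rw [hC1]; field_simp
            have hTnn : 0 ≤ ∑ i, (|x i| + |y i|) ^ (2:ℝ) :=
              Finset.sum_nonneg fun i _ => Real.rpow_nonneg (by positivity) _
            have e2 : C2 * ∑ i, (|x i| + |y i|) ^ (2:ℝ) ≤ C2 * 4 := by
              exact mul_le_mul_of_nonneg_left hT hC2nn
            have hap : (0:ℝ) ≤ (2/p)^p := Real.rpow_nonneg hα0.le _
            rw [e1]
            have : C2 * 4 = (2/p)^p * δ^p * (2 * (2-p)) := by rw [hC2]; ring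
            nlinarith [mul_nonneg hap hδp.le]
    -- finish
    have hfin : pNorm p (fun i => mazurFun (2/p) (x i) - mazurFun (2/p) (y i)) ≤
        ((2/p)^p * 4 * δ^p) ^ ((1:ℝ)/p) := by
      unfold pNorm
      apply Real.rpow_le_rpow (Finset.sum_nonneg fun i _ => Real.rpow_nonneg (abs_nonneg _) _)
        main (by positivity)
    have e3 : ((2/p)^p * 4 * δ^p) ^ ((1:ℝ)/p) = (2/p) * 4^((1:ℝ)/p) * δ := by
      rw [Real.mul_rpow (by positivity) (Real.rpow_nonneg hδ0 p),
        Real.mul_rpow (Real.rpow_nonneg hα0.le p) (by norm_num : (0:ℝ) ≤ 4),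
        ← Real.rpow_mul hα0.le, ← Real.rpow_mul hδ0, mul_one_div_cancel hp.ne',
        Real.rpow_one, Real.rpow_one]
    rw [e3] at hfin
    exact hfin

lemma mem_vadd_smul_ball {p : ℝ} (hp : 0 < p) {d : ℕ} {c z : Fin d → ℝ} {r : ℝ} (hr : 0 < r) :
    z ∈ c +ᵥ r • pBall p d ↔ pNorm p (z - c) ≤ r := by
  constructor
  · rintro ⟨s, hs, rfl⟩
    obtain ⟨b, hb, rfl⟩ := hs
    have e2 : (fun x => c +ᵥ x) ((fun x => r • x) b) - c = r • b := by
      simp only [vadd_eq_add]; ring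
    rw [e2, pNorm_smul hp, abs_of_pos hr]
    calc r * pNorm p b ≤ r * 1 := mul_le_mul_of_nonneg_left hb hr.le
      _ = r := mul_one r
  · intro h
    refine ⟨r • (r⁻¹ • (z - c)), ⟨r⁻¹ • (z - c), ?_, rfl⟩, ?_⟩
    · show pNorm p (r⁻¹ • (z - c)) ≤ 1
      rw [pNorm_smul hp, abs_of_pos (inv_pos.mpr hr), inv_mul_le_iff₀ hr, mul_one]
      exact h
    · show c +ᵥ r • r⁻¹ • (z - c) = z
      rw [vadd_eq_add, smul_smul, mul_inv_cancel₀ hr.ne', one_smul]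
      ring

/-- For `0 < p < 2` there is `L ≥ 1` depending only on `p` such that for all
`d ≥ 2` and all `k`, `e_k(S_p^{d-1}, ℓ_p^d) ≤ L · e_k(S_2^{d-1}, ℓ_2^d)`
(via the Mazur map). -/
theorem entropy_pSphere_le_mazur (p : ℝ) (hp : 0 < p) (hp2 : p < 2) :
    ∃ L : ℝ, 1 ≤ L ∧ ∀ d k : ℕ, 2 ≤ d →
      entropyNumber (pSphere p d) (pBall p d) k ≤
        L * entropyNumber (pSphere 2 d) (pBall 2 d) k := by
  set C : ℝ := (2/p) * 4 ^ (1/p) with hC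
  have hC1 : 1 ≤ C := by
    have h1 : (1:ℝ) ≤ 2/p := by rw [le_div_iff₀ hp]; linarith
    have h2 : (1:ℝ) ≤ 4 ^ (1/p) :=
      Real.one_le_rpow (by norm_num) (by positivity)
    nlinarith
  refine ⟨2 * C, by linarith, fun d k _ => ?_⟩
  set N := 2 ^ (k - 1)
  set S2 : Set ℝ := {ε : ℝ | 0 < ε ∧ ∃ c : Fin N → (Fin d → ℝ),
    pSphere 2 d ⊆ ⋃ j, (c j +ᵥ ε • pBall 2 d)} with hS2
  set Sp : Set ℝ := {ε : ℝ | 0 < ε ∧ ∃ c : Fin N → (Fin d → ℝ),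
    pSphere p d ⊆ ⋃ j, (c j +ᵥ ε • pBall p d)} with hSp
  have hSpbdd : BddBelow Sp := ⟨0, fun ε hε => hε.1.le⟩
  have hS2ne : S2.Nonempty := by
    refine ⟨1, one_pos, fun _ => 0, fun z hz => ?_⟩
    refine Set.mem_iUnion.mpr ⟨⟨0, by positivity⟩, ?_⟩
    rw [mem_vadd_smul_ball (by norm_num : (0:ℝ) < 2) one_pos]
    rw [sub_zero]
    exact le_of_eq hz
  -- key transport
  have key : ∀ ε ∈ S2, 2 * C * ε ∈ Sp := by
    rintro ε ⟨hε, c, hcov⟩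
    classical
    have hLε : 0 < 2 * C * ε := by positivity
    set c' : Fin N → (Fin d → ℝ) := fun j =>
      if h : ∃ w, w ∈ pSphere 2 d ∧ w ∈ c j +ᵥ ε • pBall 2 d then
        (fun i => mazurFun (2/p) (h.choose i)) else 0 with hc'
    refine ⟨hLε, c', fun z hz => ?_⟩
    obtain ⟨y, hy, hyz⟩ := mazur_surj hp hp2 hz
    obtain ⟨j, hj⟩ := Set.mem_iUnion.mp (hcov hy)
    have hex : ∃ w, w ∈ pSphere 2 d ∧ w ∈ c j +ᵥ ε • pBall 2 d := ⟨y, hy, hj⟩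
    obtain ⟨hw1, hw2⟩ := hex.choose_spec
    set w := hex.choose
    refine Set.mem_iUnion.mpr ⟨j, ?_⟩
    rw [mem_vadd_smul_ball hp hLε]
    have hc'j : c' j = fun i => mazurFun (2/p) (w i) := by
      rw [hc']; exact dif_pos hex
    -- distance between y and w in ℓ2
    have hyw : pNorm 2 (y - w) ≤ 2 * ε := by
      have h1 : pNorm 2 (y - c j) ≤ ε := (mem_vadd_smul_ball (by norm_num) hε).mp hj
      have h2 : pNorm 2 (w - c j) ≤ ε := (mem_vadd_smul_ball (by norm_num) hε).mp hw2
      have h3 : y - w = (y - c j) + -(w - c j) := by ring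
      calc pNorm 2 (y - w) = pNorm 2 ((y - c j) + -(w - c j)) := by rw [← h3]
        _ ≤ pNorm 2 (y - c j) + pNorm 2 (-(w - c j)) := pNorm_two_triangle _ _
        _ ≤ ε + ε := by
            have : pNorm 2 (-(w - c j)) = pNorm 2 (w - c j) := by
              have := pNorm_smul (p := 2) (by norm_num) (-1 : ℝ) (w - c j)
              simp at this
              rw [← this]
              congr 1
              funext i
              simp
            rw [this]; exact add_le_add h1 h2
        _ = 2 * ε := by ring
    have hsy : pNorm 2 y ≤ 1 := le_of_eq hy
    have hsw : pNorm 2 w ≤ 1 := le_of_eq hw1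
    have hlip := mazur_lip hp hp2 y w hsy hsw
    have : z - c' j = fun i => mazurFun (2/p) (y i) - mazurFun (2/p) (w i) := by
      rw [hc'j, ← hyz]
      rfl
    rw [this]
    calc pNorm p (fun i => mazurFun (2/p) (y i) - mazurFun (2/p) (w i)) ≤
        C * pNorm 2 (y - w) := hlip
      _ ≤ C * (2 * ε) := mul_le_mul_of_nonneg_left hyw (by linarith)
      _ = 2 * C * ε := by ring
  -- conclude
  have h1 : ∀ ε ∈ S2, sInf Sp ≤ 2 * C * ε := fun ε hε => csInf_le hSpbdd (key ε hε)
  have h2 : sInf Sp / (2 * C) ≤ sInf S2 := by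
    apply le_csInf hS2ne
    intro ε hε
    rw [div_le_iff₀ (by linarith : (0:ℝ) < 2 * C)]
    calc sInf Sp ≤ 2 * C * ε := h1 ε hε
      _ = ε * (2 * C) := by ring
  show sInf Sp ≤ 2 * C * sInf S2
  rw [div_le_iff₀ (by linarith : (0:ℝ) < 2 * C)] at h2
  linarith [h2]
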